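/- Uniqueness forces Schur complement collapse: if a partial covariance K_Ω on the 2-serrated domain Ω = (I₁×I₁)∪(I₂×I₂), J = I₁∩I₂, admits a unique completion K⋆, then K_{I₁}/K_J = K⋆/K_{I₂} and K_{I₂}/K_J = K⋆/K_{I₁}, i.e. the Schur complement of the full completion with respect to I₂ equals that of K_{I₁} with respect to the overlap J (and symmetrically). -/
import Mathlib


open Set MeasureTheory Filter Topology
open scoped RealInnerProductSpace Classical

noncomputable section

/-- `K` is a covariance kernel on the set `S`: symmetric and positive semidefinite. -/
def IsCovOn {I : Type*} (S : Set I) (K : I → I → ℝ) : Prop :=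
  (∀ s ∈ S, ∀ t ∈ S, K s t = K t s) ∧
  ∀ (n : ℕ) (t : Fin n → I), (∀ i, t i ∈ S) → ∀ c : Fin n → ℝ,
    0 ≤ ∑ i, ∑ j, c i * c j * K (t i) (t j)

/-- `Ω` is a symmetric domain containing the diagonal. -/
def IsSymmDomain {I : Type*} (Ω : Set (I × I)) : Prop :=
  (∀ s t : I, (s, t) ∈ Ω ↔ (t, s) ∈ Ω) ∧ ∀ t : I, (t, t) ∈ Ω

/-- `K` is a partial covariance on `Ω`: each square inside `Ω` carries a covariance. -/
def IsPartialCov {I : Type*} (Ω : Set (I × I)) (K : I → I → ℝ) : Prop :=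
  ∀ J : Set I, J ×ˢ J ⊆ Ω → IsCovOn J K

/-- `K` is a covariance-kernel completion of `KΩ` from the domain `Ω`. -/
def IsCompletion {I : Type*} (Ω : Set (I × I)) (KΩ K : I → I → ℝ) : Prop :=
  IsCovOn (univ : Set I) K ∧ ∀ p ∈ Ω, K p.1 p.2 = KΩ p.1 p.2

/-- `a ∈ H` represents the function `f : J → ℝ` in the (abstract realization via the feature
map `φ` of the) RKHS of the kernel realized by `φ`: `a` lies in the closed span of the
features and the reproducing formula `f u = ⟪a, φ u⟫` holds. -/
def RepIn {J : Type*} {H : Type*} [NormedAddCommGroup H] [InnerProductSpace ℝ H]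
    (φ : J → H) (a : H) (f : J → ℝ) : Prop :=
  a ∈ closure ((Submodule.span ℝ (Set.range φ) : Submodule ℝ H) : Set H) ∧
  ∀ u : J, f u = ⟪a, φ u⟫

section Helpers

variable {E : Type*} [NormedAddCommGroup E] [InnerProductSpace ℝ E]

lemma inner_sum_sum {n m : ℕ} (x : Fin n → E) (y : Fin m → E) (cx : Fin n → ℝ) (cy : Fin m → ℝ) :
    ⟪∑ i, cx i • x i, ∑ j, cy j • y j⟫ = ∑ i, ∑ j, cx i * cy j * ⟪x i, y j⟫ := by
  rw [sum_inner]
  refine Finset.sum_congr rfl fun i _ => ?_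
  rw [inner_sum]
  refine Finset.sum_congr rfl fun j _ => ?_
  rw [real_inner_smul_left, real_inner_smul_right]
  ring

lemma gram_expand {n : ℕ} (x : Fin n → E) (c : Fin n → ℝ) :
    ‖∑ i, c i • x i‖ ^ 2 = ∑ i, ∑ j, c i * c j * ⟪x i, x j⟫ := by
  rw [← real_inner_self_eq_norm_sq, inner_sum_sum]

lemma norm_le_of_inner_le_span (p : Submodule ℝ E) (x : E)
    (hx : x ∈ closure (p : Set E)) (M : ℝ) (hM : 0 ≤ M)
    (h : ∀ w ∈ p, ⟪x, w⟫ ≤ M * ‖w‖) : ‖x‖ ≤ M := by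
  obtain ⟨w, hwp, hwl⟩ := mem_closure_iff_seq_limit.mp hx
  have h1 : Tendsto (fun n => (⟪x, w n⟫ : ℝ)) atTop (𝓝 ⟪x, x⟫) :=
    tendsto_const_nhds.inner hwl
  have h2 : Tendsto (fun n => M * ‖w n‖) atTop (𝓝 (M * ‖x‖)) :=
    tendsto_const_nhds.mul hwl.norm
  have hle : ⟪x, x⟫ ≤ M * ‖x‖ :=
    le_of_tendsto_of_tendsto' h1 h2 fun n => h (w n) (hwp n)
  rw [real_inner_self_eq_norm_mul_norm] at hle
  rcases eq_or_lt_of_le (norm_nonneg x) with h0 | h0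
  · rw [← h0]; exact hM
  · exact le_of_mul_le_mul_right hle h0

lemma repr_eq {J : Type*} (φ : J → E) (x y : E)
    (hx : x ∈ closure ((Submodule.span ℝ (Set.range φ) : Submodule ℝ E) : Set E))
    (hy : y ∈ closure ((Submodule.span ℝ (Set.range φ) : Submodule ℝ E) : Set E))
    (h : ∀ u, ⟪x, φ u⟫ = ⟪y, φ u⟫) : x = y := by
  set p := Submodule.span ℝ (Set.range φ) with hp
  have hz : x - y ∈ closure (p : Set E) := by
    rw [← Submodule.topologicalClosure_coe] at hx hy ⊢
    exact sub_mem hx hy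
  have hspan : (p : Set E) ⊆ {w : E | ⟪x - y, w⟫ = (0:ℝ)} := by
    intro w hw
    rw [SetLike.mem_coe] at hw
    induction hw using Submodule.span_induction with
    | mem w hw =>
      obtain ⟨u, rfl⟩ := hw
      show ⟪x - y, φ u⟫ = (0:ℝ)
      rw [inner_sub_left, h u, sub_self]
    | zero => simp
    | add w₁ w₂ _ _ h1 h2 =>
      show ⟪x - y, w₁ + w₂⟫ = (0:ℝ)
      rw [inner_add_right]
      rw [Set.mem_setOf_eq] at h1 h2
      rw [h1, h2, add_zero]
    | smul r w _ hw =>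
      show ⟪x - y, r • w⟫ = (0:ℝ)
      rw [Set.mem_setOf_eq] at hw
      rw [real_inner_smul_right, hw, mul_zero]
  have hclosed : IsClosed {w : E | ⟪x - y, w⟫ = (0:ℝ)} :=
    isClosed_eq (continuous_const.inner continuous_id) continuous_const
  have hzero : ⟪x - y, x - y⟫ = (0:ℝ) := closure_minimal hspan hclosed hz
  exact sub_eq_zero.mp (inner_self_eq_zero.mp hzero)

lemma sum_a_mem_closure {J : Type*} {I₀ : Type*} (φ : J → E) (a : I₀ → E)
    (ha : ∀ s, a s ∈ closure ((Submodule.span ℝ (Set.range φ) : Submodule ℝ E) : Set E))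
    {n : ℕ} (t : Fin n → I₀) (c : Fin n → ℝ) :
    (∑ i, c i • a (t i)) ∈ closure ((Submodule.span ℝ (Set.range φ) : Submodule ℝ E) : Set E) := by
  rw [← Submodule.topologicalClosure_coe]
  refine Submodule.sum_mem _ fun i _ => Submodule.smul_mem _ _ ?_
  rw [← SetLike.mem_coe, Submodule.topologicalClosure_coe]
  exact ha (t i)

end Helpers

lemma schur_psd {I : Type*} {E E₂ : Type*} [NormedAddCommGroup E] [InnerProductSpace ℝ E]
    [NormedAddCommGroup E₂] [InnerProductSpace ℝ E₂]
    (Jset S : Set I) (hJS : Jset ⊆ S) (K : I → I → ℝ)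
    (φ : ↥Jset → E) (hφ : ∀ u v : ↥Jset, K u.1 v.1 = ⟪φ u, φ v⟫)
    (a : I → E) (ha : ∀ s : I, RepIn φ (a s) (fun u : ↥Jset => K s u.1))
    (Ψ : ↥S → E₂) (hΨ : ∀ u v : ↥S, K u.1 v.1 = ⟪Ψ u, Ψ v⟫)
    (n : ℕ) (t : Fin n → ↥S) (c : Fin n → ℝ) :
    ‖∑ i, c i • a (t i).1‖ ^ 2 ≤ ‖∑ i, c i • Ψ (t i)‖ ^ 2 := by
  have hkey : ‖∑ i, c i • a (t i).1‖ ≤ ‖∑ i, c i • Ψ (t i)‖ := by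
    apply norm_le_of_inner_le_span (Submodule.span ℝ (Set.range φ)) _
      (sum_a_mem_closure φ a (fun s => (ha s).1) _ c) _ (norm_nonneg _)
    intro w hw
    obtain ⟨m, f, g, rfl⟩ := Submodule.mem_span_set'.mp hw
    choose u hu using fun j => (g j).2
    have e1 : ∑ j, f j • (g j : E) = ∑ j, f j • φ (u j) :=
      Finset.sum_congr rfl fun j _ => by rw [hu j]
    set W : E₂ := ∑ j, f j • Ψ ⟨(u j).1, hJS (u j).2⟩ with hW
    have h1 : ⟪∑ i, c i • a (t i).1, ∑ j, f j • (g j : E)⟫ = ⟪∑ i, c i • Ψ (t i), W⟫ := by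
      rw [e1, inner_sum_sum, hW, inner_sum_sum]
      refine Finset.sum_congr rfl fun i _ => Finset.sum_congr rfl fun j _ => ?_
      congr 1
      exact ((ha (t i).1).2 (u j)).symm.trans (hΨ (t i) ⟨(u j).1, hJS (u j).2⟩)
    have h2 : ‖W‖ = ‖∑ j, f j • (g j : E)‖ := by
      have e : ‖W‖ ^ 2 = ‖∑ j, f j • (g j : E)‖ ^ 2 := by
        rw [hW, gram_expand, e1, gram_expand]
        refine Finset.sum_congr rfl fun j _ => Finset.sum_congr rfl fun j' _ => ?_
        congr 1
        exact ((hΨ _ _).symm.trans (hφ (u j) (u j')))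
      have := congrArg Real.sqrt e
      rwa [Real.sqrt_sq (norm_nonneg _), Real.sqrt_sq (norm_nonneg _)] at this
    rw [h1, ← h2]
    exact real_inner_le_norm _ _
  exact pow_le_pow_left₀ (norm_nonneg _) hkey 2

lemma main_collapse {I : Type*} {E E₂ : Type*} [NormedAddCommGroup E] [InnerProductSpace ℝ E]
    [NormedAddCommGroup E₂] [InnerProductSpace ℝ E₂]
    (Jset B : Set I) (hJB : Jset ⊆ B) (K : I → I → ℝ)
    (φ : ↥Jset → E) (hφ : ∀ u v : ↥Jset, K u.1 v.1 = ⟪φ u, φ v⟫)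
    (a : I → E) (ha : ∀ s : I, RepIn φ (a s) (fun u : ↥Jset => K s u.1))
    (ψ : ↥B → E₂) (hψ : ∀ u v : ↥B, K u.1 v.1 = ⟪ψ u, ψ v⟫)
    (b : I → E₂) (hb : ∀ s : I, RepIn ψ (b s) (fun u : ↥B => K s u.1))
    (s t : I)
    (hs : ∀ u : ↥B, K s u.1 = ⟪a s, a u.1⟫)
    (ht : ∀ u : ↥B, K t u.1 = ⟪a t, a u.1⟫) :
    ⟪b s, b t⟫ = ⟪a s, a t⟫ := by
  -- Step 1 : ‖a t‖ ≤ ‖b t‖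
  have hnorm : ‖a t‖ ≤ ‖b t‖ := by
    apply norm_le_of_inner_le_span (Submodule.span ℝ (Set.range φ)) _ (ha t).1 _ (norm_nonneg _)
    intro w hw
    obtain ⟨m, f, g, rfl⟩ := Submodule.mem_span_set'.mp hw
    choose u hu using fun j => (g j).2
    have e1 : ∑ j, f j • (g j : E) = ∑ j, f j • φ (u j) :=
      Finset.sum_congr rfl fun j _ => by rw [hu j]
    set W : E₂ := ∑ j, f j • ψ ⟨(u j).1, hJB (u j).2⟩ with hW
    have h1 : ⟪a t, ∑ j, f j • (g j : E)⟫ = ⟪b t, W⟫ := by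
      rw [e1, inner_sum, hW, inner_sum]
      refine Finset.sum_congr rfl fun j _ => ?_
      rw [real_inner_smul_right, real_inner_smul_right]
      congr 1
      exact ((ha t).2 (u j)).symm.trans ((hb t).2 ⟨(u j).1, hJB (u j).2⟩)
    have h2 : ‖W‖ = ‖∑ j, f j • (g j : E)‖ := by
      have e : ‖W‖ ^ 2 = ‖∑ j, f j • (g j : E)‖ ^ 2 := by
        rw [hW, gram_expand, e1, gram_expand]
        refine Finset.sum_congr rfl fun j _ => Finset.sum_congr rfl fun j' _ => ?_
        congr 1
        exact ((hψ _ _).symm.trans (hφ (u j) (u j')))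
      have := congrArg Real.sqrt e
      rwa [Real.sqrt_sq (norm_nonneg _), Real.sqrt_sq (norm_nonneg _)] at this
    rw [h1, ← h2]
    exact real_inner_le_norm _ _
  -- Step 2 : approximating sequence for b t
  obtain ⟨w, hwmem, hwlim⟩ := mem_closure_iff_seq_limit.mp (hb t).1
  have hrep : ∀ n : ℕ, ∃ (m : ℕ) (f : Fin m → ℝ) (u : Fin m → ↥B),
      w n = ∑ j, f j • ψ (u j) := by
    intro n
    obtain ⟨m, f, g, hg⟩ := Submodule.mem_span_set'.mp (hwmem n)
    choose u hu using fun j => (g j).2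
    exact ⟨m, f, u, by rw [← hg]; exact Finset.sum_congr rfl fun j _ => by rw [hu j]⟩
  choose m f u hwn using hrep
  set v : ℕ → E := fun n => ∑ j, f n j • a (u n j).1 with hv
  have hbsw : ∀ n, ⟪b s, w n⟫ = ⟪a s, v n⟫ := by
    intro n
    rw [hwn n, hv]
    simp only
    rw [inner_sum, inner_sum]
    refine Finset.sum_congr rfl fun j _ => ?_
    rw [real_inner_smul_right, real_inner_smul_right]
    congr 1
    exact ((hb s).2 (u n j)).symm.trans (hs (u n j))
  have hcontr : ∀ n, ‖v n - a t‖ ≤ ‖w n - b t‖ := by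
    intro n
    have h1 : ‖v n‖ ^ 2 ≤ ‖w n‖ ^ 2 := by
      rw [hwn n]
      exact schur_psd Jset B hJB K φ hφ a ha ψ hψ (m n) (u n) (f n)
    have h2 : ⟪v n, a t⟫ = ⟪w n, b t⟫ := by
      rw [hwn n, hv]
      simp only
      rw [sum_inner, sum_inner]
      refine Finset.sum_congr rfl fun j _ => ?_
      rw [real_inner_smul_left, real_inner_smul_left]
      congr 1
      rw [real_inner_comm]
      exact ((ht (u n j)).symm.trans ((hb t).2 (u n j))).trans (real_inner_comm _ _)
    have h3 : ‖v n - a t‖ ^ 2 ≤ ‖w n - b t‖ ^ 2 := by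
      rw [norm_sub_sq_real, norm_sub_sq_real, h2]
      nlinarith [norm_nonneg (a t), norm_nonneg (b t)]
    nlinarith [norm_nonneg (v n - a t), norm_nonneg (w n - b t)]
  have hvlim : Tendsto v atTop (𝓝 (a t)) := by
    rw [tendsto_iff_norm_sub_tendsto_zero]
    have hw0 : Tendsto (fun n => ‖w n - b t‖) atTop (𝓝 0) := by
      rw [← tendsto_iff_norm_sub_tendsto_zero]; exact hwlim
    exact squeeze_zero (fun n => norm_nonneg _) hcontr hw0
  have h1 : Tendsto (fun n => (⟪b s, w n⟫ : ℝ)) atTop (𝓝 ⟪b s, b t⟫) :=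
    tendsto_const_nhds.inner hwlim
  have h2 : Tendsto (fun n => (⟪a s, v n⟫ : ℝ)) atTop (𝓝 ⟪a s, a t⟫) :=
    tendsto_const_nhds.inner hvlim
  have h3 : Tendsto (fun n => (⟪b s, w n⟫ : ℝ)) atTop (𝓝 ⟪a s, a t⟫) := by
    simpa only [hbsw] using h2
  exact tendsto_nhds_unique h1 h3

/-- Uniqueness forces Schur complement collapse: if `KΩ` on the 2-serrated domain
`Ω = (I₁×I₁) ∪ (I₂×I₂)` admits the unique completion `K⋆`, then
`K_{I₁}/K_J = K⋆/K_{I₂}` on `(I₁∖I₂)²` and `K_{I₂}/K_J = K⋆/K_{I₁}` on `(I₂∖I₁)²`.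
The Schur complements w.r.t. `J = I₁∩I₂`, `I₂` and `I₁` are expressed via feature
realizations `(H,φ)`, `(H₂,ψ₂)`, `(H₁,ψ₁)` of `K_J`, `K⋆|_{I₂×I₂}`, `K⋆|_{I₁×I₁}` and
representing vectors `a s`, `b s`, `c s` of the corresponding sections. -/
theorem uniqueness_schur_collapse {I : Type*} (I₁ I₂ : Set I)
    (hcover : I₁ ∪ I₂ = univ) (hne : (I₁ ∩ I₂).Nonempty)
    (KΩ : I → I → ℝ)
    (hpc : IsPartialCov ((I₁ ×ˢ I₁) ∪ (I₂ ×ˢ I₂)) KΩ)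
    (Kstar : I → I → ℝ)
    (hK : IsCompletion ((I₁ ×ˢ I₁) ∪ (I₂ ×ˢ I₂)) KΩ Kstar)
    (huniq : ∀ K' : I → I → ℝ,
      IsCompletion ((I₁ ×ˢ I₁) ∪ (I₂ ×ˢ I₂)) KΩ K' → K' = Kstar)
    (H : Type*) [NormedAddCommGroup H] [InnerProductSpace ℝ H]
    (φ : ↥(I₁ ∩ I₂) → H)
    (hφ : ∀ u v : ↥(I₁ ∩ I₂), KΩ u.1 v.1 = ⟪φ u, φ v⟫)
    (a : I → H)
    (ha : ∀ s : I, RepIn φ (a s) (fun u : ↥(I₁ ∩ I₂) => KΩ s u.1))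
    (H₂ : Type*) [NormedAddCommGroup H₂] [InnerProductSpace ℝ H₂]
    (ψ₂ : ↥I₂ → H₂)
    (hψ₂ : ∀ u v : ↥I₂, Kstar u.1 v.1 = ⟪ψ₂ u, ψ₂ v⟫)
    (b : I → H₂)
    (hb : ∀ s : I, RepIn ψ₂ (b s) (fun u : ↥I₂ => Kstar s u.1))
    (H₁ : Type*) [NormedAddCommGroup H₁] [InnerProductSpace ℝ H₁]
    (ψ₁ : ↥I₁ → H₁)
    (hψ₁ : ∀ u v : ↥I₁, Kstar u.1 v.1 = ⟪ψ₁ u, ψ₁ v⟫)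
    (c : I → H₁)
    (hc : ∀ s : I, RepIn ψ₁ (c s) (fun u : ↥I₁ => Kstar s u.1)) :
    (∀ s ∈ I₁ \ I₂, ∀ t ∈ I₁ \ I₂,
      KΩ s t - ⟪a s, a t⟫ = Kstar s t - ⟪b s, b t⟫) ∧
    (∀ s ∈ I₂ \ I₁, ∀ t ∈ I₂ \ I₁,
      KΩ s t - ⟪a s, a t⟫ = Kstar s t - ⟪c s, c t⟫) := by
  classical
  obtain ⟨u₀, hu₀⟩ := hne
  have hsymm : ∀ s t : I, Kstar s t = Kstar t s := fun s t =>
    hK.1.1 s (mem_univ s) t (mem_univ t)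
  have hmem : ∀ s : I, s ∈ I₁ ∪ I₂ := fun s => by rw [hcover]; exact mem_univ s
  have hΩ1 : ∀ s t : I, s ∈ I₁ → t ∈ I₁ → Kstar s t = KΩ s t := fun s t hs ht =>
    hK.2 (s, t) (Or.inl (mk_mem_prod hs ht))
  have hΩ2 : ∀ s t : I, s ∈ I₂ → t ∈ I₂ → Kstar s t = KΩ s t := fun s t hs ht =>
    hK.2 (s, t) (Or.inr (mk_mem_prod hs ht))
  have hJs : ∀ (s : I) (u : ↥(I₁ ∩ I₂)), Kstar s u.1 = KΩ s u.1 := by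
    intro s u
    rcases hmem s with hs | hs
    · exact hΩ1 s u.1 hs u.2.1
    · exact hΩ2 s u.1 hs u.2.2
  have hφ' : ∀ u v : ↥(I₁ ∩ I₂), Kstar u.1 v.1 = ⟪φ u, φ v⟫ := fun u v =>
    (hJs u.1 v).trans (hφ u v)
  have ha' : ∀ s : I, RepIn φ (a s) (fun u : ↥(I₁ ∩ I₂) => Kstar s u.1) :=
    fun s => ⟨(ha s).1, fun u => (hJs s u).trans ((ha s).2 u)⟩
  have haJ : ∀ u : ↥(I₁ ∩ I₂), a u.1 = φ u := by
    intro u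
    refine repr_eq φ _ _ (ha u.1).1 (subset_closure (Submodule.subset_span ⟨u, rfl⟩)) ?_
    intro v
    rw [← (ha u.1).2 v]
    exact hφ u v
  have hinnJ : ∀ (s u : I), u ∈ I₁ ∩ I₂ → ⟪a s, a u⟫ = KΩ s u := by
    intro s u hu
    have h := (ha s).2 ⟨u, hu⟩
    rw [← haJ ⟨u, hu⟩] at h
    exact h.symm
  -- the canonical completion
  set C : I → I → ℝ := fun s t =>
    ⟪a s, a t⟫ + (if s ∈ I₁ ∧ t ∈ I₁ then KΩ s t - ⟪a s, a t⟫ else 0)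
      + (if s ∈ I₂ ∧ t ∈ I₂ then KΩ s t - ⟪a s, a t⟫ else 0) with hCdef
  have hCcomp : ∀ p ∈ (I₁ ×ˢ I₁) ∪ (I₂ ×ˢ I₂), C p.1 p.2 = KΩ p.1 p.2 := by
    rintro ⟨s, t⟩ (⟨hs, ht⟩ | ⟨hs, ht⟩) <;> simp only [hCdef]
    · rw [if_pos (show s ∈ I₁ ∧ t ∈ I₁ from ⟨hs, ht⟩)]
      by_cases h2 : s ∈ I₂ ∧ t ∈ I₂
      · rw [if_pos h2]
        have := hinnJ s t ⟨ht, h2.2⟩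
        linarith
      · rw [if_neg h2]; ring
    · rw [if_pos (show s ∈ I₂ ∧ t ∈ I₂ from ⟨hs, ht⟩)]
      by_cases h1 : s ∈ I₁ ∧ t ∈ I₁
      · rw [if_pos h1]
        have := hinnJ s t ⟨h1.2, ht⟩
        linarith
      · rw [if_neg h1]; ring
  have hsymm1 : ∀ s t : I, s ∈ I₁ → t ∈ I₁ → KΩ s t = KΩ t s := fun s t hs ht => by
    rw [← hΩ1 s t hs ht, ← hΩ1 t s ht hs]; exact hsymm s t
  have hsymm2 : ∀ s t : I, s ∈ I₂ → t ∈ I₂ → KΩ s t = KΩ t s := fun s t hs ht => by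
    rw [← hΩ2 s t hs ht, ← hΩ2 t s ht hs]; exact hsymm s t
  have hCsymm : ∀ s t : I, C s t = C t s := by
    intro s t
    simp only [hCdef]
    have e1 : (if s ∈ I₁ ∧ t ∈ I₁ then KΩ s t - ⟪a s, a t⟫ else 0)
        = (if t ∈ I₁ ∧ s ∈ I₁ then KΩ t s - ⟪a t, a s⟫ else 0) := by
      by_cases h : s ∈ I₁ ∧ t ∈ I₁
      · rw [if_pos h, if_pos ⟨h.2, h.1⟩, hsymm1 s t h.1 h.2, real_inner_comm]
      · rw [if_neg h, if_neg fun h' => h ⟨h'.2, h'.1⟩]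
    have e2 : (if s ∈ I₂ ∧ t ∈ I₂ then KΩ s t - ⟪a s, a t⟫ else 0)
        = (if t ∈ I₂ ∧ s ∈ I₂ then KΩ t s - ⟪a t, a s⟫ else 0) := by
      by_cases h : s ∈ I₂ ∧ t ∈ I₂
      · rw [if_pos h, if_pos ⟨h.2, h.1⟩, hsymm2 s t h.1 h.2, real_inner_comm]
      · rw [if_neg h, if_neg fun h' => h ⟨h'.2, h'.1⟩]
    rw [e1, e2, real_inner_comm (a s) (a t)]
  have hCpsd : ∀ (n : ℕ) (t : Fin n → I), ∀ cc : Fin n → ℝ,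
      0 ≤ ∑ i, ∑ j, cc i * cc j * C (t i) (t j) := by
    intro n t cc
    have hsplit : ∑ i, ∑ j, cc i * cc j * C (t i) (t j)
        = (∑ i, ∑ j, cc i * cc j * ⟪a (t i), a (t j)⟫)
          + (∑ i, ∑ j, cc i * cc j *
              (if t i ∈ I₁ ∧ t j ∈ I₁ then KΩ (t i) (t j) - ⟪a (t i), a (t j)⟫ else 0))
          + (∑ i, ∑ j, cc i * cc j *
              (if t i ∈ I₂ ∧ t j ∈ I₂ then KΩ (t i) (t j) - ⟪a (t i), a (t j)⟫ else 0)) := by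
      rw [← Finset.sum_add_distrib, ← Finset.sum_add_distrib]
      refine Finset.sum_congr rfl fun i _ => ?_
      rw [← Finset.sum_add_distrib, ← Finset.sum_add_distrib]
      refine Finset.sum_congr rfl fun j _ => ?_
      simp only [hCdef]; ring
    rw [hsplit]
    have hpos0 : 0 ≤ ∑ i, ∑ j, cc i * cc j * ⟪a (t i), a (t j)⟫ := by
      rw [← gram_expand]; positivity
    have hpos1 : 0 ≤ ∑ i, ∑ j, cc i * cc j *
        (if t i ∈ I₁ ∧ t j ∈ I₁ then KΩ (t i) (t j) - ⟪a (t i), a (t j)⟫ else 0) := by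
      set t' : Fin n → ↥I₁ := fun i => if h : t i ∈ I₁ then ⟨t i, h⟩ else ⟨u₀, hu₀.1⟩ with ht'
      set c' : Fin n → ℝ := fun i => if t i ∈ I₁ then cc i else 0 with hc'
      have heq : ∑ i, ∑ j, cc i * cc j *
            (if t i ∈ I₁ ∧ t j ∈ I₁ then KΩ (t i) (t j) - ⟪a (t i), a (t j)⟫ else 0)
          = ∑ i, ∑ j, c' i * c' j * (KΩ (t' i).1 (t' j).1 - ⟪a (t' i).1, a (t' j).1⟫) := by
        refine Finset.sum_congr rfl fun i _ => Finset.sum_congr rfl fun j _ => ?_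
        by_cases hi : t i ∈ I₁ <;> by_cases hj : t j ∈ I₁ <;> simp [ht', hc', hi, hj]
      rw [heq]
      have hS := schur_psd (I₁ ∩ I₂) I₁ inter_subset_left Kstar φ hφ' a ha' ψ₁ hψ₁ n t' c'
      have hgram : ‖∑ i, c' i • ψ₁ (t' i)‖ ^ 2
          = ∑ i, ∑ j, c' i * c' j * KΩ (t' i).1 (t' j).1 := by
        rw [gram_expand]
        refine Finset.sum_congr rfl fun i _ => Finset.sum_congr rfl fun j _ => ?_
        congr 1
        exact (hψ₁ (t' i) (t' j)).symm.trans (hΩ1 _ _ (t' i).2 (t' j).2)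
      rw [gram_expand] at hS
      rw [hgram] at hS
      have hsub : ∑ i, ∑ j, c' i * c' j * (KΩ (t' i).1 (t' j).1 - ⟪a (t' i).1, a (t' j).1⟫)
          = (∑ i, ∑ j, c' i * c' j * KΩ (t' i).1 (t' j).1)
            - ∑ i, ∑ j, c' i * c' j * ⟪a (t' i).1, a (t' j).1⟫ := by
        rw [← Finset.sum_sub_distrib]
        refine Finset.sum_congr rfl fun i _ => ?_
        rw [← Finset.sum_sub_distrib]
        exact Finset.sum_congr rfl fun j _ => by ring
      rw [hsub]
      linarith
    have hpos2 : 0 ≤ ∑ i, ∑ j, cc i * cc j *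
        (if t i ∈ I₂ ∧ t j ∈ I₂ then KΩ (t i) (t j) - ⟪a (t i), a (t j)⟫ else 0) := by
      set t' : Fin n → ↥I₂ := fun i => if h : t i ∈ I₂ then ⟨t i, h⟩ else ⟨u₀, hu₀.2⟩ with ht'
      set c' : Fin n → ℝ := fun i => if t i ∈ I₂ then cc i else 0 with hc'
      have heq : ∑ i, ∑ j, cc i * cc j *
            (if t i ∈ I₂ ∧ t j ∈ I₂ then KΩ (t i) (t j) - ⟪a (t i), a (t j)⟫ else 0)
          = ∑ i, ∑ j, c' i * c' j * (KΩ (t' i).1 (t' j).1 - ⟪a (t' i).1, a (t' j).1⟫) := by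
        refine Finset.sum_congr rfl fun i _ => Finset.sum_congr rfl fun j _ => ?_
        by_cases hi : t i ∈ I₂ <;> by_cases hj : t j ∈ I₂ <;> simp [ht', hc', hi, hj]
      rw [heq]
      have hS := schur_psd (I₁ ∩ I₂) I₂ inter_subset_right Kstar φ hφ' a ha' ψ₂ hψ₂ n t' c'
      have hgram : ‖∑ i, c' i • ψ₂ (t' i)‖ ^ 2
          = ∑ i, ∑ j, c' i * c' j * KΩ (t' i).1 (t' j).1 := by
        rw [gram_expand]
        refine Finset.sum_congr rfl fun i _ => Finset.sum_congr rfl fun j _ => ?_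
        congr 1
        exact (hψ₂ (t' i) (t' j)).symm.trans (hΩ2 _ _ (t' i).2 (t' j).2)
      rw [gram_expand] at hS
      rw [hgram] at hS
      have hsub : ∑ i, ∑ j, c' i * c' j * (KΩ (t' i).1 (t' j).1 - ⟪a (t' i).1, a (t' j).1⟫)
          = (∑ i, ∑ j, c' i * c' j * KΩ (t' i).1 (t' j).1)
            - ∑ i, ∑ j, c' i * c' j * ⟪a (t' i).1, a (t' j).1⟫ := by
        rw [← Finset.sum_sub_distrib]
        refine Finset.sum_congr rfl fun i _ => ?_
        rw [← Finset.sum_sub_distrib]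
        exact Finset.sum_congr rfl fun j _ => by ring
      rw [hsub]
      linarith
    linarith
  have hCC : C = Kstar :=
    huniq C ⟨⟨fun s _ t _ => hCsymm s t, fun n t _ cc => hCpsd n t cc⟩, hCcomp⟩
  have hstar1 : ∀ s ∈ I₁ \ I₂, ∀ u : ↥I₂, Kstar s u.1 = ⟪a s, a u.1⟫ := by
    intro s hs u
    rw [← hCC]
    simp only [hCdef]
    rw [if_neg (show ¬(s ∈ I₂ ∧ (u : I) ∈ I₂) from fun h => hs.2 h.1)]
    by_cases hu1 : u.1 ∈ I₁
    · rw [if_pos (show s ∈ I₁ ∧ (u : I) ∈ I₁ from ⟨hs.1, hu1⟩)]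
      have := hinnJ s u.1 ⟨hu1, u.2⟩
      linarith
    · rw [if_neg (show ¬(s ∈ I₁ ∧ (u : I) ∈ I₁) from fun h => hu1 h.2)]; ring
  have hstar2 : ∀ s ∈ I₂ \ I₁, ∀ u : ↥I₁, Kstar s u.1 = ⟪a s, a u.1⟫ := by
    intro s hs u
    rw [← hCC]
    simp only [hCdef]
    rw [if_neg (show ¬(s ∈ I₁ ∧ (u : I) ∈ I₁) from fun h => hs.2 h.1)]
    by_cases hu2 : u.1 ∈ I₂
    · rw [if_pos (show s ∈ I₂ ∧ (u : I) ∈ I₂ from ⟨hs.1, hu2⟩)]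
      have := hinnJ s u.1 ⟨u.2, hu2⟩
      linarith
    · rw [if_neg (show ¬(s ∈ I₂ ∧ (u : I) ∈ I₂) from fun h => hu2 h.2)]; ring
  constructor
  · intro s hs t htt
    have hmain := main_collapse (I₁ ∩ I₂) I₂ inter_subset_right Kstar φ hφ' a ha'
      ψ₂ hψ₂ b hb s t (fun u => hstar1 s hs u) (fun u => hstar1 t htt u)
    rw [hmain, hΩ1 s t hs.1 htt.1]
  · intro s hs t htt
    have hmain := main_collapse (I₁ ∩ I₂) I₁ inter_subset_left Kstar φ hφ' a ha'
      ψ₁ hψ₁ c hc s t (fun u => hstar2 s hs u) (fun u => hstar2 t htt u)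
    rw [hmain, hΩ2 s t hs.1 htt.1]
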